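/- arXiv:1706.04502 — 4 statements merged into one kernel-verified Lean document; each statement's English description precedes it below -/
import Mathlib

section
/- Let p be prime, d ∈ ℕ, β > 1, τ ∈ (0,1), and let γ = (γ_j)_{j≥1} be weights with 0 < γ_j ≤ 1. Then there exist at least ⌈τ(p−1)^d⌉ vectors z ∈ {1,…,p−1}^d such that P_{β,γ}(p,z) ≤ (1/(1−τ)) · V_d(β,γ)/p. -/
open scoped BigOperators
open Classical

noncomputable section

/-- The Riemann zeta function for real argument `β > 1`, as a real series. -/
def zetaR (β : ℝ) : ℝ := ∑' n : ℕ, 1 / ((n : ℝ) + 1) ^ β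

/-- The weight function `r_{α,γ}(h) = ∏_j max {1, |h_j|^α / γ_j}`. -/
def rwt (d : ℕ) (α : ℝ) (γ : ℕ → ℝ) (h : Fin d → ℤ) : ℝ :=
  ∏ j : Fin d, max 1 (|(h j : ℝ)| ^ α / γ j)

/-- `V_d(β,γ) = 3 ∏_{j=1}^d (1 + 2 γ_j ζ(β))`. -/
def Vd (d : ℕ) (β : ℝ) (γ : ℕ → ℝ) : ℝ :=
  3 * ∏ j : Fin d, (1 + 2 * γ j * zetaR β)

/-- The set of primes `p` with `⌈n/2⌉ + 1 ≤ p ≤ n`. -/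
def Pset (n : ℕ) : Finset ℕ := (Finset.Icc ((n + 1) / 2 + 1) n).filter Nat.Prime

/-- The set of generating vectors `{1,…,p−1}^d`. -/
def genSet (d p : ℕ) : Finset (Fin d → ℕ) := Fintype.piFinset fun _ => Finset.Icc 1 (p - 1)

/-- The nonzero points of the dual lattice: `h ≠ 0` with `h·z ≡ 0 (mod p)`. -/
def dual (d p : ℕ) (z : Fin d → ℕ) : Set (Fin d → ℤ) :=
  {h | h ≠ 0 ∧ (p : ℤ) ∣ ∑ j, h j * (z j : ℤ)}

/-- `ρ_{α,γ}(p,z) = min { r_{α,γ}(h) : h ∈ dual lattice, h ≠ 0 }`. -/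
def rho (d : ℕ) (α : ℝ) (γ : ℕ → ℝ) (p : ℕ) (z : Fin d → ℕ) : ℝ :=
  sInf (rwt d α γ '' dual d p z)

/-- `P_{β,γ}(p,z) = ∑_{h ∈ dual lattice, h ≠ 0} 1 / r_{β,γ}(h)`. -/
def Pqual (d : ℕ) (β : ℝ) (γ : ℕ → ℝ) (p : ℕ) (z : Fin d → ℕ) : ℝ :=
  ∑' h : dual d p z, 1 / rwt d β γ h.1

/-- The set `Z_p` of good generating vectors. -/
def Zp (d : ℕ) (α : ℝ) (γ : ℕ → ℝ) (p : ℕ) : Finset (Fin d → ℕ) :=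
  (genSet d p).filter fun z => ∀ lam ∈ Set.Ioo (0 : ℝ) α,
    ((p : ℝ) / (2 * Vd d (α / lam) fun j => γ j ^ (1 / lam))) ^ lam ≤ rho d α γ p z

/-- The randomized error quantity of the randomized lattice algorithm `M_n`,
applied to a function with Fourier coefficients `a`. -/
def Err (d : ℕ) (α : ℝ) (γ : ℕ → ℝ) (n : ℕ) (a : (Fin d → ℤ) → ℂ) : ℝ :=
  (1 / ((Pset n).card : ℝ)) * ∑ p ∈ Pset n,
    (1 / ((Zp d α γ p).card : ℝ)) * ∑ z ∈ Zp d α γ p, ‖∑' h : dual d p z, a h.1‖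


private lemma zeta_summable {β : ℝ} (hβ : 1 < β) :
    Summable (fun n : ℕ => 1 / ((n : ℝ) + 1) ^ β) := by
  have h1 := Real.summable_one_div_nat_rpow.mpr hβ
  have h2 := (summable_nat_add_iff 1).mpr h1
  exact h2.congr fun n => by push_cast; ring_nf

private lemma zetaR_nonneg {β : ℝ} : 0 ≤ zetaR β :=
  tsum_nonneg fun n => by positivity

private lemma sum_pos_bound {β c : ℝ} (hβ : 1 < β) (hc : 0 ≤ c) {f : ℤ → ℝ}
    (hb : ∀ k : ℤ, 0 < k → f k ≤ c / (k : ℝ) ^ β)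
    (s : Finset ℤ) (hs : ∀ k ∈ s, 0 < k) :
    ∑ k ∈ s, f k ≤ c * zetaR β := by
  have step1 : ∑ k ∈ s, f k ≤ ∑ k ∈ s, c * (1 / (((k - 1).toNat : ℝ) + 1) ^ β) := by
    refine Finset.sum_le_sum fun k hk => ?_
    have hk1 : (1:ℤ) ≤ k := hs k hk
    have ht : (((k - 1).toNat : ℤ)) = k - 1 := Int.toNat_of_nonneg (by omega)
    have htr : (((k - 1).toNat : ℝ)) = (k : ℝ) - 1 := by exact_mod_cast congrArg (Int.cast : ℤ → ℝ) ht
    rw [htr]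
    have h := hb k hk1
    calc f k ≤ c / (k:ℝ)^β := h
      _ = c * (1 / ((k:ℝ) - 1 + 1)^β) := by rw [sub_add_cancel]; ring
  have hinj : ∀ x ∈ s, ∀ y ∈ s, (x - 1).toNat = (y - 1).toNat → x = y := by
    intro a ha b hb' hab
    have := hs a ha; have := hs b hb'
    omega
  have step2 : ∑ k ∈ s, c * (1 / (((k - 1).toNat : ℝ) + 1) ^ β)
      = ∑ n ∈ s.image (fun k : ℤ => (k - 1).toNat), c * (1 / ((n : ℝ) + 1) ^ β) :=
    (Finset.sum_image (g := fun k : ℤ => (k - 1).toNat) (f := fun n : ℕ => c * (1 / ((n : ℝ) + 1) ^ β)) hinj).symm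
  have step3 : ∑ n ∈ s.image (fun k : ℤ => (k - 1).toNat), c * (1 / ((n : ℝ) + 1) ^ β)
      ≤ c * zetaR β := by
    rw [← Finset.mul_sum]
    exact mul_le_mul_of_nonneg_left
      (Summable.sum_le_tsum _ (fun n _ => by positivity) (zeta_summable hβ)) hc
  linarith

private lemma zsum_bound {β : ℝ} (hβ : 1 < β) {f : ℤ → ℝ} {A c : ℝ}
    (hA : f 0 ≤ A) (hA0 : 0 ≤ A) (hnn : ∀ k, 0 ≤ f k) (hc : 0 ≤ c)
    (hb : ∀ k : ℤ, k ≠ 0 → f k ≤ c / |(k : ℝ)| ^ β) :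
    Summable f ∧ ∑' k, f k ≤ A + 2 * c * zetaR β := by
  have key : ∀ u : Finset ℤ, ∑ k ∈ u, f k ≤ A + 2 * c * zetaR β := by
    intro u
    rw [← Finset.sum_filter_add_sum_filter_not u (fun k => 0 < k),
      ← Finset.sum_filter_add_sum_filter_not (u.filter (fun k => ¬ 0 < k)) (fun k => k < 0)]
    have hpos : ∑ k ∈ u.filter (fun k => 0 < k), f k ≤ c * zetaR β := by
      refine sum_pos_bound hβ hc (fun k hk => ?_) _ (fun k hk => (Finset.mem_filter.1 hk).2)
      have h := hb k (by omega)
      rwa [abs_of_pos (by exact_mod_cast hk)] at h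
    have hneg : ∑ k ∈ (u.filter (fun k => ¬ 0 < k)).filter (fun k => k < 0), f k
        ≤ c * zetaR β := by
      set s := (u.filter (fun k => ¬ 0 < k)).filter (fun k => k < 0) with hsdef
      have hmem : ∀ k ∈ s, k < 0 := fun k hk => (Finset.mem_filter.1 hk).2
      have hinj : ∀ x ∈ s, ∀ y ∈ s, -x = -y → x = y := fun x _ y _ h => by omega
      have : ∑ k ∈ s, f k = ∑ k ∈ s.image (fun k => -k), f (-k) := by
        rw [Finset.sum_image hinj]; simp
      rw [this]
      refine sum_pos_bound hβ hc (fun k hk => ?_) _ ?_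
      · have h := hb (-k) (by omega)
        rw [show ((-k : ℤ) : ℝ) = -(k:ℝ) by push_cast; ring, abs_neg,
          abs_of_pos (by exact_mod_cast hk)] at h
        exact h
      · intro k hk
        obtain ⟨a, ha, rfl⟩ := Finset.mem_image.1 hk
        have := hmem a ha; omega
    have hzero : ∑ k ∈ (u.filter (fun k => ¬ 0 < k)).filter (fun k => ¬ k < 0), f k ≤ A := by
      have hsub : (u.filter (fun k => ¬ 0 < k)).filter (fun k => ¬ k < 0) ⊆ {0} := by
        intro k hk
        simp only [Finset.mem_filter] at hk
        simp only [Finset.mem_singleton]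
        omega
      calc ∑ k ∈ (u.filter (fun k => ¬ 0 < k)).filter (fun k => ¬ k < 0), f k
          ≤ ∑ k ∈ ({0} : Finset ℤ), f k :=
            Finset.sum_le_sum_of_subset_of_nonneg hsub (fun i _ _ => hnn i)
        _ = f 0 := Finset.sum_singleton _ _
        _ ≤ A := hA
    linarith
  have hsum : Summable f := summable_of_sum_le hnn key
  exact ⟨hsum, Summable.tsum_le_of_sum_le hsum key⟩

private lemma gj_le {β γj : ℝ} (hβ : 1 < β) (hγ : 0 < γj) (k : ℤ) (hk : k ≠ 0) :
    (max 1 (|(k:ℝ)| ^ β / γj))⁻¹ ≤ γj / |(k : ℝ)| ^ β := by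
  have hk1 : (1:ℝ) ≤ |(k:ℝ)| := by
    rw [← Int.cast_abs]; exact_mod_cast Int.one_le_abs (by omega)
  have hx : (1:ℝ) ≤ |(k:ℝ)| ^ β := Real.one_le_rpow hk1 (by linarith)
  have hpos : 0 < |(k:ℝ)| ^ β / γj := by positivity
  calc (max 1 (|(k:ℝ)| ^ β / γj))⁻¹ ≤ (|(k:ℝ)| ^ β / γj)⁻¹ :=
        inv_anti₀ hpos (le_max_right _ _)
    _ = γj / |(k:ℝ)| ^ β := by rw [inv_div]

private lemma pi_summable_bound {d : ℕ} {f : Fin d → ℤ → ℝ} {c : Fin d → ℝ}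
    (hnn : ∀ j k, 0 ≤ f j k) (hs : ∀ j, Summable (f j))
    (hb : ∀ j, ∑' k, f j k ≤ c j) :
    Summable (fun h : Fin d → ℤ => ∏ j, f j (h j)) ∧
      ∑' h : Fin d → ℤ, ∏ j, f j (h j) ≤ ∏ j, c j := by
  have key : ∀ u : Finset (Fin d → ℤ), ∑ h ∈ u, ∏ j, f j (h j) ≤ ∏ j, c j := by
    intro u
    have hsub : u ⊆ Fintype.piFinset (fun j => u.image (fun h => h j)) := fun h hh =>
      Fintype.mem_piFinset.2 fun j => Finset.mem_image_of_mem _ hh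
    calc ∑ h ∈ u, ∏ j, f j (h j)
        ≤ ∑ h ∈ Fintype.piFinset (fun j => u.image (fun h => h j)), ∏ j, f j (h j) :=
          Finset.sum_le_sum_of_subset_of_nonneg hsub
            (fun h _ _ => Finset.prod_nonneg fun j _ => hnn j _)
      _ = ∏ j, ∑ k ∈ u.image (fun h => h j), f j k := (Finset.prod_univ_sum _ _).symm
      _ ≤ ∏ j, c j := Finset.prod_le_prod (fun j _ => Finset.sum_nonneg fun k _ => hnn j k)
          (fun j _ => le_trans (Summable.sum_le_tsum _ (fun k _ => hnn j k) (hs j)) (hb j))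
  have hsum : Summable (fun h : Fin d → ℤ => ∏ j, f j (h j)) :=
    summable_of_sum_le (fun h => Finset.prod_nonneg fun j _ => hnn j _) key
  exact ⟨hsum, Summable.tsum_le_of_sum_le hsum key⟩

private lemma prod_one_add_div {ι : Type*} (s : Finset ι) (a : ι → ℝ) (q : ℝ)
    (ha : ∀ i ∈ s, 0 ≤ a i) (hq : 1 ≤ q) :
    ∏ i ∈ s, (1 + a i / q) ≤ 1 + (∏ i ∈ s, (1 + a i) - 1) / q := by
  induction s using Finset.cons_induction with
  | empty => simp
  | cons i s hi ih =>
    rw [Finset.prod_cons, Finset.prod_cons]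
    have hai : 0 ≤ a i := ha i (Finset.mem_cons_self i s)
    have ha' : ∀ j ∈ s, 0 ≤ a j := fun j hj => ha j (Finset.mem_cons.2 (Or.inr hj))
    have ih' := ih ha'
    have hP : 1 ≤ ∏ j ∈ s, (1 + a j) := by
      calc (1:ℝ) = ∏ _j ∈ s, (1:ℝ) := (Finset.prod_const_one).symm
        _ ≤ ∏ j ∈ s, (1 + a j) := Finset.prod_le_prod (fun j _ => zero_le_one)
            (fun j hj => by have := ha' j hj; linarith)
    have hq0 : 0 < q := by linarith
    have hstep : (1 + a i / q) * ∏ j ∈ s, (1 + a j / q)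
        ≤ (1 + a i / q) * (1 + (∏ j ∈ s, (1 + a j) - 1) / q) := by
      refine mul_le_mul_of_nonneg_left ih' (by positivity)
    refine le_trans hstep ?_
    set P := ∏ j ∈ s, (1 + a j) with hPdef
    rw [← sub_nonneg]
    have expand : 1 + ((1 + a i) * P - 1) / q - (1 + a i / q) * (1 + (P - 1) / q)
        = a i * (P - 1) * (q - 1) / (q * q) := by
      field_simp; ring
    rw [expand]
    exact div_nonneg
      (mul_nonneg (mul_nonneg hai (sub_nonneg.2 hP)) (sub_nonneg.2 hq)) (by positivity)

private lemma genSet_card (d p : ℕ) : (genSet d p).card = (p-1)^d := by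
  simp [genSet]

private lemma count_bound {p d : ℕ} (hp : p.Prime) (h : Fin d → ℤ) :
    ((genSet d p).filter (fun z => (p:ℤ) ∣ ∑ j, h j * (z j : ℤ))).card
      ≤ (p-1)^(d-1) + (if ∀ j, (p:ℤ) ∣ h j then (p-1)^d else 0) := by
  by_cases hall : ∀ j, (p:ℤ) ∣ h j
  · rw [if_pos hall]
    calc ((genSet d p).filter _).card ≤ (genSet d p).card := Finset.card_filter_le _ _
      _ = (p-1)^d := genSet_card d p
      _ ≤ (p-1)^(d-1) + (p-1)^d := Nat.le_add_left _ _
  · push_neg at hall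
    obtain ⟨j0, hj0⟩ := hall
    set T : Finset (Fin d → ℕ) :=
      Fintype.piFinset (fun j => if j = j0 then ({0} : Finset ℕ) else Finset.Icc 1 (p-1)) with hT
    have hTcard : T.card = (p-1)^(d-1) := by
      rw [hT, Fintype.card_piFinset]
      have : ∀ j : Fin d, (if j = j0 then ({0} : Finset ℕ) else Finset.Icc 1 (p-1)).card
          = if j = j0 then 1 else (p-1) := by
        intro j; by_cases hj : j = j0 <;> simp [hj]
      rw [Finset.prod_congr rfl (fun j _ => this j)]
      rw [← Finset.prod_erase_mul _ _ (Finset.mem_univ j0), if_pos rfl, mul_one]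
      rw [Finset.prod_congr rfl (fun j hj => if_neg (Finset.ne_of_mem_erase hj)),
        Finset.prod_const, Finset.card_erase_of_mem (Finset.mem_univ j0),
        Finset.card_univ, Fintype.card_fin]
    have hcard : ((genSet d p).filter (fun z => (p:ℤ) ∣ ∑ j, h j * (z j : ℤ))).card ≤ T.card := by
      refine Finset.card_le_card_of_injOn (fun z => Function.update z j0 0) ?_ ?_
      · intro z hz
        simp only [Finset.coe_filter, Set.mem_setOf_eq] at hz
        refine Fintype.mem_piFinset.2 fun j => ?_
        by_cases hj : j = j0
        · subst hj; simp [Function.update_self]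
        · rw [if_neg hj]
          show Function.update z j0 0 j ∈ Finset.Icc 1 (p-1)
          rw [Function.update_of_ne hj]
          exact Fintype.mem_piFinset.1 hz.1 j
      · intro z hz z' hz' heq
        simp only [Finset.coe_filter, Set.mem_setOf_eq] at hz hz'
        have hoff : ∀ j, j ≠ j0 → z j = z' j := by
          intro j hj
          have h2 : Function.update z j0 0 j = Function.update z' j0 0 j := congrFun heq j
          rwa [Function.update_of_ne hj, Function.update_of_ne hj] at h2
        have hdvd : (p:ℤ) ∣ h j0 * ((z j0 : ℤ) - (z' j0 : ℤ)) := by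
          have hd1 : (p:ℤ) ∣ (∑ j, h j * (z j : ℤ)) - (∑ j, h j * (z' j : ℤ)) :=
            dvd_sub hz.2 hz'.2
          have : (∑ j, h j * (z j : ℤ)) - (∑ j, h j * (z' j : ℤ))
              = ∑ j, h j * ((z j : ℤ) - (z' j : ℤ)) := by
            rw [← Finset.sum_sub_distrib]
            exact Finset.sum_congr rfl fun j _ => by ring
          rw [this, Finset.sum_eq_single j0 (fun j _ hj => by
            rw [hoff j hj, sub_self, mul_zero]) (fun hj => absurd (Finset.mem_univ j0) hj)] at hd1
          exact hd1
        have hz0 : (p:ℤ) ∣ (z j0 : ℤ) - (z' j0 : ℤ) :=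
          (Int.Prime.dvd_mul' hp hdvd).resolve_left hj0
        have hb1 := Finset.mem_Icc.1 (Fintype.mem_piFinset.1 hz.1 j0)
        have hb2 := Finset.mem_Icc.1 (Fintype.mem_piFinset.1 hz'.1 j0)
        have hzz : z j0 = z' j0 := by
          have hp2 : 2 ≤ p := hp.two_le
          have h0 : (z j0 : ℤ) - (z' j0 : ℤ) = 0 := by
            refine Int.eq_zero_of_dvd_of_natAbs_lt_natAbs hz0 ?_
            have : ((z j0 : ℤ) - (z' j0 : ℤ)).natAbs < p := by
              rcases hb1 with ⟨hb11, hb12⟩; rcases hb2 with ⟨hb21, hb22⟩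
              omega
            simpa using this
          omega
        funext j
        by_cases hj : j = j0
        · rw [hj, hzz]
        · exact hoff j hj
    rw [hTcard] at hcard
    exact le_trans hcard (Nat.le_add_right _ _)

set_option maxHeartbeats 1000000

/-- Corollary 2: there exist at least `⌈τ(p−1)^d⌉` generating vectors `z ∈ {1,…,p−1}^d`
with `P_{β,γ}(p,z) ≤ (1/(1−τ)) V_d(β,γ)/p`. -/
theorem many_good_generating_vectors_Pqual
    (p : ℕ) (hp : p.Prime) (d : ℕ) (hd : 0 < d) (β : ℝ) (hβ : 1 < β)
    (τ : ℝ) (hτ : τ ∈ Set.Ioo (0 : ℝ) 1)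
    (γ : ℕ → ℝ) (hγpos : ∀ j, 0 < γ j) (hγle : ∀ j, γ j ≤ 1) :
    ⌈τ * (((p - 1) ^ d : ℕ) : ℝ)⌉₊ ≤
      ((genSet d p).filter fun z =>
        Pqual d β γ p z ≤ 1 / (1 - τ) * (Vd d β γ / p)).card := by
  obtain ⟨hτ0, hτ1⟩ := hτ
  have hζ0 : 0 ≤ zetaR β := zetaR_nonneg
  have hp2 : 2 ≤ p := hp.two_le
  have hpR1 : (1:ℝ) ≤ (p:ℝ) := by exact_mod_cast hp.one_le
  have hpR0 : (0:ℝ) < (p:ℝ) := by linarith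
  -- per-coordinate functions
  set f1 : Fin d → ℤ → ℝ := fun j k => (max 1 (|(k:ℝ)| ^ β / γ j))⁻¹ with hf1def
  have hmaxpos : ∀ (j : Fin d) (k : ℤ), (0:ℝ) < max 1 (|(k:ℝ)| ^ β / γ j) :=
    fun j k => lt_of_lt_of_le zero_lt_one (le_max_left _ _)
  have hf1nn : ∀ j k, 0 ≤ f1 j k := fun j k => inv_nonneg.2 (le_of_lt (hmaxpos j k))
  have hf1zero : ∀ j, f1 j 0 = 1 := by
    intro j
    have : |((0:ℤ):ℝ)| ^ β = 0 := by
      rw [Int.cast_zero, abs_zero, Real.zero_rpow (by linarith)]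
    simp only [hf1def, this, zero_div, max_eq_left zero_le_one, inv_one]
  have hf1sum : ∀ j, Summable (f1 j) ∧ ∑' k, f1 j k ≤ 1 + 2 * γ j * zetaR β := by
    intro j
    exact zsum_bound hβ (le_of_eq (hf1zero j)) zero_le_one (hf1nn j)
      ((hγpos j).le) (fun k hk => gj_le hβ (hγpos j) k hk)
  have hf2sum : ∀ j, Summable (fun k : ℤ => f1 j ((p:ℤ) * k)) ∧
      ∑' k : ℤ, f1 j ((p:ℤ) * k) ≤ 1 + 2 * (γ j / p) * zetaR β := by
    intro j
    refine zsum_bound hβ (by rw [mul_zero]; exact le_of_eq (hf1zero j)) zero_le_one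
      (fun k => hf1nn j _) (div_nonneg (hγpos j).le hpR0.le) (fun k hk => ?_)
    have habs : |(((p:ℤ) * k : ℤ):ℝ)| = (p:ℝ) * |(k:ℝ)| := by
      push_cast
      rw [abs_mul, abs_of_pos hpR0]
    have hk0 : (0:ℝ) < |(k:ℝ)| := by
      rw [← Int.cast_abs]
      exact_mod_cast Int.one_le_abs (by omega) |>.trans_lt' zero_lt_one
    have hkb : (0:ℝ) < |(k:ℝ)| ^ β := Real.rpow_pos_of_pos hk0 β
    have hpβ : (p:ℝ) ≤ (p:ℝ) ^ β := by
      nth_rewrite 1 [← Real.rpow_one (p:ℝ)]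
      exact Real.rpow_le_rpow_of_exponent_le hpR1 (le_of_lt hβ)
    calc f1 j ((p:ℤ) * k) ≤ γ j / |(((p:ℤ) * k : ℤ):ℝ)| ^ β :=
          gj_le hβ (hγpos j) _ (mul_ne_zero (Int.natCast_ne_zero.2 hp.ne_zero) hk)
      _ = γ j / ((p:ℝ) ^ β * |(k:ℝ)| ^ β) := by
          rw [habs, Real.mul_rpow (le_of_lt hpR0) (abs_nonneg _)]
      _ ≤ γ j / ((p:ℝ) * |(k:ℝ)| ^ β) := by
          apply div_le_div_of_nonneg_left (le_of_lt (hγpos j)) (by positivity)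
          exact mul_le_mul_of_nonneg_right hpβ (le_of_lt hkb)
      _ = γ j / p / |(k:ℝ)| ^ β := by rw [div_div]
  -- the global weight function
  set g : (Fin d → ℤ) → ℝ := fun h => ∏ j, f1 j (h j) with hgdef
  have hgnn : ∀ h, 0 ≤ g h := fun h => Finset.prod_nonneg fun j _ => hf1nn j _
  set W : ℝ := ∏ j : Fin d, (1 + 2 * γ j * zetaR β) with hWdef
  have hW1 : (1:ℝ) ≤ W := by
    rw [hWdef]
    calc (1:ℝ) = ∏ _j : Fin d, (1:ℝ) := (Finset.prod_const_one).symm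
      _ ≤ _ := Finset.prod_le_prod (fun j _ => zero_le_one)
          (fun j _ => by have := hγpos j; have := hζ0; nlinarith)
  have hgB := pi_summable_bound (f := f1) (c := fun j => 1 + 2 * γ j * zetaR β)
    hf1nn (fun j => (hf1sum j).1) (fun j => (hf1sum j).2)
  have hgsum : Summable g := hgB.1
  have hgle : ∑' h, g h ≤ W := hgB.2
  have hg0 : g 0 = 1 := by
    rw [hgdef]
    simp only [Pi.zero_apply]
    rw [Finset.prod_congr rfl (fun j _ => hf1zero j), Finset.prod_const_one]
  -- the p-divisible part
  have hG2 := pi_summable_bound (f := fun j k => f1 j ((p:ℤ) * k))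
    (c := fun j => 1 + 2 * (γ j / p) * zetaR β)
    (fun j k => hf1nn j _) (fun j => (hf2sum j).1) (fun j => (hf2sum j).2)
  have hG2le : ∑' m : Fin d → ℤ, ∏ j, f1 j ((p:ℤ) * m j) ≤ 1 + (W - 1) / p := by
    refine le_trans hG2.2 ?_
    have heq : ∏ j : Fin d, (1 + 2 * (γ j / p) * zetaR β)
        = ∏ j : Fin d, (1 + (2 * γ j * zetaR β) / (p:ℝ)) :=
      Finset.prod_congr rfl fun j _ => by ring
    rw [heq, hWdef]
    exact prod_one_add_div (Finset.univ : Finset (Fin d)) (fun j => 2 * γ (j:ℕ) * zetaR β) (p:ℝ)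
      (fun j _ => mul_nonneg (mul_nonneg (by norm_num) (hγpos j).le) hζ0) hpR1
  -- g3 : restriction to p-divisible vectors
  set g3 : (Fin d → ℤ) → ℝ := fun h => if ∀ j, (p:ℤ) ∣ h j then g h else 0 with hg3def
  have hg3nn : ∀ h, 0 ≤ g3 h := fun h => by
    rw [hg3def]; dsimp only; split <;> [exact hgnn h; exact le_refl 0]
  have key2 : ∀ u : Finset (Fin d → ℤ), ∑ h ∈ u, g3 h ≤ 1 + (W - 1) / p := by
    intro u
    have h1 : ∑ h ∈ u, g3 h = ∑ h ∈ u.filter (fun h => ∀ j, (p:ℤ) ∣ h j), g h :=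
      (Finset.sum_filter _ _).symm
    set s := u.filter (fun h => ∀ j, (p:ℤ) ∣ h j) with hs
    have hdvd : ∀ h ∈ s, ∀ j, (p:ℤ) ∣ h j := fun h hh => (Finset.mem_filter.1 hh).2
    have h2 : ∀ h ∈ s, g h = ∏ j, f1 j ((p:ℤ) * (h j / p)) := by
      intro h hh
      exact Finset.prod_congr rfl fun j _ => by
        rw [Int.mul_ediv_cancel' (hdvd h hh j)]
    have hinj : ∀ x ∈ s, ∀ y ∈ s, (fun h : Fin d → ℤ => fun j => h j / (p:ℤ)) x
        = (fun h : Fin d → ℤ => fun j => h j / (p:ℤ)) y → x = y := by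
      intro x hx y hy hxy
      funext j
      have := congrFun hxy j
      dsimp only at this
      rw [← Int.mul_ediv_cancel' (hdvd x hx j), ← Int.mul_ediv_cancel' (hdvd y hy j), this]
    calc ∑ h ∈ u, g3 h = ∑ h ∈ s, g h := h1
      _ = ∑ h ∈ s, (fun m => ∏ j, f1 j ((p:ℤ) * m j)) ((fun h : Fin d → ℤ => fun j => h j / (p:ℤ)) h) :=
          Finset.sum_congr rfl h2
      _ = ∑ m ∈ s.image (fun h : Fin d → ℤ => fun j => h j / (p:ℤ)), ∏ j, f1 j ((p:ℤ) * m j) :=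
          (Finset.sum_image (g := fun h : Fin d → ℤ => fun j => h j / (p:ℤ))
            (f := fun m : Fin d → ℤ => ∏ j, f1 j ((p:ℤ) * m j)) hinj).symm
      _ ≤ ∑' m : Fin d → ℤ, ∏ j, f1 j ((p:ℤ) * m j) :=
          Summable.sum_le_tsum _ (fun m _ => Finset.prod_nonneg fun j _ => hf1nn j _) hG2.1
      _ ≤ 1 + (W - 1) / p := hG2le
  have hg3sum : Summable g3 := summable_of_sum_le hg3nn key2
  have hg3le : ∑' h, g3 h ≤ 1 + (W - 1) / p := Summable.tsum_le_of_sum_le hg3sum key2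
  have hg3zero : g3 0 = 1 := by
    rw [hg3def]; dsimp only
    rw [if_pos (fun j => by simp), hg0]
  -- g2, g1 : versions with the origin removed
  set g2 : (Fin d → ℤ) → ℝ := fun h => if h = 0 then 0 else g3 h with hg2def
  have hg2nn : ∀ h, 0 ≤ g2 h := fun h => by
    rw [hg2def]; dsimp only; split <;> [exact le_refl 0; exact hg3nn h]
  have hg2le_g3 : ∀ h, g2 h ≤ g3 h := fun h => by
    rw [hg2def]; dsimp only; split <;> [exact hg3nn h; exact le_refl _]
  have hg2sum : Summable g2 := Summable.of_nonneg_of_le hg2nn hg2le_g3 hg3sum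
  have hg2le : ∑' h, g2 h ≤ (W - 1) / p := by
    have := Summable.tsum_eq_add_tsum_ite hg3sum 0
    have heq : ∑' h, (if h = (0 : Fin d → ℤ) then 0 else g3 h) = ∑' h, g2 h := by
      exact tsum_congr fun h => by rw [hg2def]
    rw [heq, hg3zero] at this
    linarith [hg3le, this.symm.le, this.le]
  set g1 : (Fin d → ℤ) → ℝ := fun h => if h = 0 then 0 else g h with hg1def
  have hg1nn : ∀ h, 0 ≤ g1 h := fun h => by
    rw [hg1def]; dsimp only; split <;> [exact le_refl 0; exact hgnn h]
  have hg1le_g : ∀ h, g1 h ≤ g h := fun h => by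
    rw [hg1def]; dsimp only; split <;> [exact hgnn h; exact le_refl _]
  have hg1sum : Summable g1 := Summable.of_nonneg_of_le hg1nn hg1le_g hgsum
  have hg1le : ∑' h, g1 h ≤ W := le_trans (Summable.tsum_le_tsum hg1le_g hg1sum hgsum) hgle
  -- rewrite Pqual as a tsum over the full lattice
  have hrwtg : ∀ h, 1 / rwt d β γ h = g h := by
    intro h
    rw [one_div, rwt, hgdef, ← Finset.prod_inv_distrib]
  have hPq : ∀ z, Pqual d β γ p z = ∑' h, Set.indicator (dual d p z) g h := by
    intro z
    rw [Pqual, tsum_subtype (dual d p z) (fun h => 1 / rwt d β γ h)]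
    exact tsum_congr fun h => by
      by_cases hh : h ∈ dual d p z
      · rw [Set.indicator_of_mem hh, Set.indicator_of_mem hh, hrwtg]
      · rw [Set.indicator_of_notMem hh, Set.indicator_of_notMem hh]
  have hind_le : ∀ z h, Set.indicator (dual d p z) g h ≤ g h :=
    fun z h => Set.indicator_apply_le' (fun _ => le_refl _) (fun _ => hgnn h)
  have hind_nn : ∀ z h, 0 ≤ Set.indicator (dual d p z) g h :=
    fun z h => Set.indicator_apply_nonneg (fun _ => hgnn h)
  have hFsum : ∀ z, Summable (fun h => Set.indicator (dual d p z) g h) :=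
    fun z => Summable.of_nonneg_of_le (hind_nn z) (hind_le z) hgsum
  -- the averaged quantity
  have hswap : ∑ z ∈ genSet d p, Pqual d β γ p z
      = ∑' h, ∑ z ∈ genSet d p, Set.indicator (dual d p z) g h := by
    rw [Finset.sum_congr rfl (fun z _ => hPq z)]
    exact (Summable.tsum_finsetSum (fun z _ => hFsum z)).symm
  -- pointwise bound on the inner sum
  have hpt : ∀ h, ∑ z ∈ genSet d p, Set.indicator (dual d p z) g h
      ≤ (((p-1)^(d-1) : ℕ) : ℝ) * g1 h + (((p-1)^d : ℕ) : ℝ) * g2 h := by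
    intro h
    by_cases h0 : h = 0
    · subst h0
      have hz : ∀ z, Set.indicator (dual d p z) g 0 = 0 := fun z =>
        Set.indicator_of_notMem (fun hc => hc.1 rfl) _
      rw [Finset.sum_congr rfl fun z _ => hz z, Finset.sum_const_zero]
      rw [hg1def, hg2def]; dsimp only
      rw [if_pos rfl, if_pos rfl, mul_zero, mul_zero, add_zero]
    · have hzi : ∀ z, Set.indicator (dual d p z) g h
          = if (p:ℤ) ∣ ∑ j, h j * (z j : ℤ) then g h else 0 := by
        intro z
        by_cases hdv : (p:ℤ) ∣ ∑ j, h j * (z j : ℤ)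
        · rw [if_pos hdv, Set.indicator_of_mem (show h ∈ dual d p z from ⟨h0, hdv⟩)]
        · rw [if_neg hdv, Set.indicator_of_notMem (fun hc => hdv hc.2)]
      rw [Finset.sum_congr rfl fun z _ => hzi z, ← Finset.sum_filter, Finset.sum_const,
        nsmul_eq_mul]
      have hcb : (((genSet d p).filter (fun z => (p:ℤ) ∣ ∑ j, h j * (z j : ℤ))).card : ℝ)
          ≤ ((p-1)^(d-1) : ℕ) + (if ∀ j, (p:ℤ) ∣ h j then (((p-1)^d : ℕ) : ℝ) else 0) := by
        have hthis := count_bound hp h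
        by_cases hall : ∀ j, (p:ℤ) ∣ h j
        · have h2 : ((genSet d p).filter (fun z => (p:ℤ) ∣ ∑ j, h j * (z j : ℤ))).card
              ≤ (p-1)^(d-1) + (p-1)^d := by simpa [hall] using hthis
          rw [if_pos hall]
          push_cast
          exact_mod_cast h2
        · have h2 : ((genSet d p).filter (fun z => (p:ℤ) ∣ ∑ j, h j * (z j : ℤ))).card
              ≤ (p-1)^(d-1) := by simpa [hall] using hthis
          rw [if_neg hall, add_zero]
          exact_mod_cast h2
      calc (((genSet d p).filter (fun z => (p:ℤ) ∣ ∑ j, h j * (z j : ℤ))).card : ℝ) * g h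
          ≤ (((p-1)^(d-1) : ℕ) + (if ∀ j, (p:ℤ) ∣ h j then (((p-1)^d : ℕ) : ℝ) else 0)) * g h :=
            mul_le_mul_of_nonneg_right hcb (hgnn h)
        _ = (((p-1)^(d-1) : ℕ) : ℝ) * g1 h + (((p-1)^d : ℕ) : ℝ) * g2 h := by
            rw [add_mul, hg1def, hg2def, hg3def]; dsimp only
            rw [if_neg h0]
            by_cases hall : ∀ j, (p:ℤ) ∣ h j
            · simp only [if_pos hall, if_neg h0]
            · simp only [if_neg hall, if_neg h0, zero_mul, mul_zero]
  -- summing the pointwise bound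
  have hRHSsum : Summable (fun h => (((p-1)^(d-1) : ℕ) : ℝ) * g1 h + (((p-1)^d : ℕ) : ℝ) * g2 h) :=
    Summable.add (hg1sum.mul_left _) (hg2sum.mul_left _)
  have hLHSsum : Summable (fun h => ∑ z ∈ genSet d p, Set.indicator (dual d p z) g h) :=
    summable_sum fun z _ => hFsum z
  have hS : ∑ z ∈ genSet d p, Pqual d β γ p z
      ≤ (((p-1)^(d-1) : ℕ) : ℝ) * W + (((p-1)^d : ℕ) : ℝ) * ((W - 1) / p) := by
    rw [hswap]
    calc ∑' h, ∑ z ∈ genSet d p, Set.indicator (dual d p z) g h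
        ≤ ∑' h, ((((p-1)^(d-1) : ℕ) : ℝ) * g1 h + (((p-1)^d : ℕ) : ℝ) * g2 h) :=
          Summable.tsum_le_tsum hpt hLHSsum hRHSsum
      _ = (((p-1)^(d-1) : ℕ) : ℝ) * (∑' h, g1 h) + (((p-1)^d : ℕ) : ℝ) * (∑' h, g2 h) := by
          rw [Summable.tsum_add (hg1sum.mul_left _) (hg2sum.mul_left _), tsum_mul_left, tsum_mul_left]
      _ ≤ (((p-1)^(d-1) : ℕ) : ℝ) * W + (((p-1)^d : ℕ) : ℝ) * ((W - 1) / p) := by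
          refine add_le_add ?_ ?_
          · exact mul_le_mul_of_nonneg_left hg1le (by positivity)
          · exact mul_le_mul_of_nonneg_left hg2le (by positivity)
  -- arithmetic: total bound N * (3W) / p
  set N : ℝ := (((p-1)^d : ℕ) : ℝ) with hNdef
  have hN0 : 0 ≤ N := by positivity
  have hn1p : (((p-1)^(d-1) : ℕ) : ℝ) * (p:ℝ) ≤ 2 * N := by
    have hnat : (p-1)^(d-1) * p ≤ 2 * (p-1)^d := by
      have hd' : (p-1)^d = (p-1)^(d-1) * (p-1) := by
        rw [← pow_succ]
        congr 1
        omega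
      rw [hd', ← mul_assoc]
      calc (p-1)^(d-1) * p ≤ (p-1)^(d-1) * (2*(p-1)) := Nat.mul_le_mul_left _ (by omega)
        _ = 2 * (p-1)^(d-1) * (p-1) := by ring
    calc (((p-1)^(d-1) : ℕ) : ℝ) * (p:ℝ) = (((p-1)^(d-1) * p : ℕ) : ℝ) := by push_cast; ring
      _ ≤ ((2 * (p-1)^d : ℕ) : ℝ) := by exact_mod_cast hnat
      _ = 2 * N := by rw [hNdef]; push_cast; ring
  have hStot : ∑ z ∈ genSet d p, Pqual d β γ p z ≤ N * (3 * W) / p := by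
    refine le_trans hS ?_
    have h1 : (((p-1)^(d-1) : ℕ) : ℝ) * W ≤ 2 * N * W / p := by
      rw [le_div_iff₀ hpR0]
      calc (((p-1)^(d-1) : ℕ) : ℝ) * W * p = ((((p-1)^(d-1) : ℕ) : ℝ) * p) * W := by ring
        _ ≤ (2 * N) * W := mul_le_mul_of_nonneg_right hn1p (by linarith)
        _ = 2 * N * W := rfl
    have h2 : N * ((W - 1) / p) ≤ N * (W / p) :=
      mul_le_mul_of_nonneg_left ((div_le_div_iff_of_pos_right hpR0).2 (by linarith)) hN0
    have h3 : 2 * N * W / p + N * (W / p) = N * (3 * W) / p := by ring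
    linarith
  -- Markov argument
  have hVd : Vd d β γ = 3 * W := by rw [Vd, hWdef]
  set t : ℝ := 1 / (1 - τ) * (Vd d β γ / p) with htdef
  have ht0 : 0 < t := by
    rw [htdef, hVd]
    have h1τ : 0 < 1 - τ := by linarith
    exact mul_pos (div_pos one_pos h1τ) (div_pos (by linarith) hpR0)
  have hPnn : ∀ z, 0 ≤ Pqual d β γ p z := by
    intro z
    rw [hPq z]
    exact tsum_nonneg (hind_nn z)
  set B := (genSet d p).filter (fun z => ¬ (Pqual d β γ p z ≤ t)) with hBdef
  have hABcard : ((genSet d p).filter fun z => Pqual d β γ p z ≤ t).card + B.card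
      = (p-1)^d := by
    rw [hBdef, Finset.card_filter_add_card_filter_not, genSet_card]
  have hBts : (B.card : ℝ) * t ≤ ∑ z ∈ B, Pqual d β γ p z := by
    have := Finset.card_nsmul_le_sum B (fun z => Pqual d β γ p z) t
      (fun z hz => le_of_lt (lt_of_not_ge (Finset.mem_filter.1 hz).2))
    rwa [nsmul_eq_mul] at this
  have hBle : ∑ z ∈ B, Pqual d β γ p z ≤ ∑ z ∈ genSet d p, Pqual d β γ p z :=
    Finset.sum_le_sum_of_subset_of_nonneg (Finset.filter_subset _ _) (fun z _ _ => hPnn z)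
  have hNt : N * (3 * W) / p = N * (1 - τ) * t := by
    have h1τ : (1:ℝ) - τ ≠ 0 := by intro hc; rw [sub_eq_zero] at hc; linarith
    rw [htdef, hVd]
    field_simp
  have hBcard : (B.card : ℝ) ≤ N * (1 - τ) := by
    have h1 : (B.card : ℝ) * t ≤ N * (1 - τ) * t := by
      rw [← hNt]
      exact le_trans hBts (le_trans hBle hStot)
    exact le_of_mul_le_mul_right h1 ht0
  have hceil : (⌈τ * N⌉₊ : ℝ) < τ * N + 1 := Nat.ceil_lt_add_one (mul_nonneg hτ0.le hN0)
  have hfinal : ⌈τ * N⌉₊ + B.card < (p-1)^d + 1 := by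
    have hcast : (((p-1)^d : ℕ) : ℝ) = N := rfl
    have h5 : (⌈τ * N⌉₊ : ℝ) + (B.card : ℝ) < N + 1 := by linarith
    rw [hNdef] at h5
    exact_mod_cast h5
  have : ⌈τ * N⌉₊ + B.card ≤ (p-1)^d := by omega
  omega
end
end

section
/- Let d ∈ ℕ, α > 0, let γ = (γ_j)_{j≥1} be weights with 0 < γ_j ≤ 1, let n ≥ 2, and let B > 0 be such that ρ_{α,γ}(p,z) > B for all p ∈ P_n and z ∈ Z_p, where each Z_p is a nonempty subset of {1,…,p−1}^d. Then for every sequence a : ℤ^d → ℂ with ∑_{h∈ℤ^d} (r_{α,γ}(h))² |a_h|² ≤ 1 one has (1/|P_n|) ∑_{p∈P_n} (1/|Z_p|) ∑_{z∈Z_p} |∑_{h∈ℤ^d\{0}, h·z ≡ 0 (mod p)} a_h| ≤ ( ∑_{h∈ℤ^d\{0}, r_{α,γ}(h) > B} (ω_n(h)/r_{α,γ}(h))² )^{1/2}, where ω_n(h) := (1/|P_n|) ∑_{p∈P_n} (1/|Z_p|) ∑_{z∈Z_p} 1(h·z ≡ 0 (mod p)). -/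
open scoped BigOperators
open Classical
open scoped ENNReal NNReal

noncomputable section

/-- `ω_n(h)`: the probability that `h` lies in the dual lattice of the randomly chosen
lattice rule. -/
def omegan (d n : ℕ) (Z : ℕ → Finset (Fin d → ℕ)) (h : Fin d → ℤ) : ℝ :=
  (1 / ((Pset n).card : ℝ)) * ∑ p ∈ Pset n,
    (1 / ((Z p).card : ℝ)) * ∑ z ∈ Z p,
      (if (p : ℤ) ∣ ∑ j, h j * (z j : ℤ) then (1 : ℝ) else 0)

open MeasureTheory in
private lemma ennreal_cauchy_schwarz {ι : Type*} (f g : ι → ℝ≥0∞) :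
    ∑' i, f i * g i ≤ (∑' i, f i ^ (2:ℝ)) ^ ((1:ℝ)/2) * (∑' i, g i ^ (2:ℝ)) ^ ((1:ℝ)/2) := by
  letI : MeasurableSpace ι := ⊤
  have hpq : Real.HolderConjugate 2 2 := Real.HolderConjugate.two_two
  have h := ENNReal.lintegral_mul_le_Lp_mul_Lq (Measure.count : Measure ι) hpq
    (measurable_from_top (f := f)).aemeasurable (measurable_from_top (f := g)).aemeasurable
  rw [lintegral_count' (measurable_from_top), lintegral_count' (measurable_from_top),
    lintegral_count' (measurable_from_top)] at h
  simpa using h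

private lemma rwt_one_le (d : ℕ) (α : ℝ) (γ : ℕ → ℝ) (h : Fin d → ℤ) : (1:ℝ) ≤ rwt d α γ h := by
  unfold rwt
  calc (1:ℝ) = ∏ _j : Fin d, (1:ℝ) := by simp
    _ ≤ ∏ j : Fin d, max 1 (|(h j : ℝ)| ^ α / γ j) :=
        Finset.prod_le_prod (fun _ _ => zero_le_one) (fun j _ => le_max_left _ _)

private lemma rwt_pos (d : ℕ) (α : ℝ) (γ : ℕ → ℝ) (h : Fin d → ℤ) : (0:ℝ) < rwt d α γ h :=
  lt_of_lt_of_le one_pos (rwt_one_le d α γ h)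

/-- The randomized error of the randomized lattice algorithm is bounded by
`(∑_{h ≠ 0, r_{α,γ}(h) > B} (ω_n(h)/r_{α,γ}(h))²)^{1/2}` (an inequality in `[0,∞]`). -/
theorem randomized_error_le_omega_sum
    (d : ℕ) (hd : 0 < d) (α : ℝ) (hα : 0 < α)
    (γ : ℕ → ℝ) (hγpos : ∀ j, 0 < γ j) (hγle : ∀ j, γ j ≤ 1)
    (n : ℕ) (hn : 2 ≤ n) (B : ℝ) (hB : 0 < B)
    (Z : ℕ → Finset (Fin d → ℕ))
    (hZsub : ∀ p ∈ Pset n, Z p ⊆ genSet d p)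
    (hZne : ∀ p ∈ Pset n, (Z p).Nonempty)
    (hρ : ∀ p ∈ Pset n, ∀ z ∈ Z p, B < rho d α γ p z)
    (a : (Fin d → ℤ) → ℂ)
    (ha : Summable fun h : Fin d → ℤ => (rwt d α γ h) ^ 2 * ‖a h‖ ^ 2)
    (ha1 : (∑' h : Fin d → ℤ, (rwt d α γ h) ^ 2 * ‖a h‖ ^ 2) ≤ 1) :
    ENNReal.ofReal ((1 / ((Pset n).card : ℝ)) * ∑ p ∈ Pset n,
        (1 / ((Z p).card : ℝ)) * ∑ z ∈ Z p, ‖∑' h : dual d p z, a h.1‖) ≤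
      (∑' h : {h : Fin d → ℤ // h ≠ 0 ∧ B < rwt d α γ h},
        ENNReal.ofReal ((omegan d n Z h.1 / rwt d α γ h.1) ^ 2)) ^ (1 / 2 : ℝ) := by
  set T : Set (Fin d → ℤ) := {h | h ≠ 0 ∧ B < rwt d α γ h} with hT
  set N : (Fin d → ℤ) → ℝ≥0∞ := fun h => ENNReal.ofReal ‖a h‖ with hN
  set ind : ℕ → (Fin d → ℕ) → (Fin d → ℤ) → ℝ≥0∞ :=
    fun p z h => if h ∈ dual d p z then 1 else 0 with hind
  set cP : ℝ := 1 / ((Pset n).card : ℝ) with hcP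
  set cZ : ℕ → ℝ := fun p => 1 / ((Z p).card : ℝ) with hcZ
  have hcPn : 0 ≤ cP := by positivity
  have hcZn : ∀ p, 0 ≤ cZ p := fun p => by positivity
  set cPE : ℝ≥0∞ := ENNReal.ofReal cP with hcPE
  set cZE : ℕ → ℝ≥0∞ := fun p => ENNReal.ofReal (cZ p) with hcZE
  -- membership in the dual forces membership in T
  have hdualT : ∀ p ∈ Pset n, ∀ z ∈ Z p, dual d p z ⊆ T := by
    intro p hp z hz h hh
    refine ⟨hh.1, lt_of_lt_of_le (hρ p hp z hz) ?_⟩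
    refine csInf_le ⟨0, ?_⟩ ⟨h, hh, rfl⟩
    rintro x ⟨y, -, rfl⟩
    exact le_of_lt (rwt_pos d α γ y)
  -- Step A
  have keyA : ∀ p z, ENNReal.ofReal ‖∑' h : dual d p z, a h.1‖ ≤
      ∑' h : Fin d → ℤ, ind p z h * N h := by
    intro p z
    have e : ∑' h : Fin d → ℤ, ind p z h * N h = ∑' h : dual d p z, N h.1 := by
      rw [tsum_subtype (dual d p z) N]
      refine tsum_congr fun h => ?_
      by_cases hh : h ∈ dual d p z <;> simp [Set.indicator_apply, hh, hind]
    rw [e]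
    by_cases hs : Summable (fun h : dual d p z => a h.1)
    · have hns : Summable fun h : dual d p z => ‖a h.1‖ := summable_norm_iff.mpr hs
      calc ENNReal.ofReal ‖∑' h : dual d p z, a h.1‖
          ≤ ENNReal.ofReal (∑' h : dual d p z, ‖a h.1‖) :=
            ENNReal.ofReal_le_ofReal (norm_tsum_le_tsum_norm hns)
        _ = ∑' h : dual d p z, N h.1 :=
            ENNReal.ofReal_tsum_of_nonneg (fun _ => norm_nonneg _) hns
    · rw [tsum_eq_zero_of_not_summable hs]
      simp
  -- the weight
  set W : (Fin d → ℤ) → ℝ≥0∞ :=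
    fun h => cPE * ∑ p ∈ Pset n, cZE p * ∑ z ∈ Z p, ind p z h with hW
  -- Step B : bound LHS by ∑' W * N
  have keyB : ENNReal.ofReal (cP * ∑ p ∈ Pset n,
      cZ p * ∑ z ∈ Z p, ‖∑' h : dual d p z, a h.1‖) ≤ ∑' h, W h * N h := by
    have e2 : ∑' h, W h * N h
        = cPE * ∑ p ∈ Pset n, cZE p * ∑ z ∈ Z p, ∑' h, ind p z h * N h := by
      calc ∑' h, W h * N h
          = ∑' h, cPE * ∑ p ∈ Pset n, cZE p * ∑ z ∈ Z p, ind p z h * N h := by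
            refine tsum_congr fun h => ?_
            simp only [hW, Finset.sum_mul, mul_assoc, Finset.mul_sum]
        _ = cPE * ∑ p ∈ Pset n, ∑' h, cZE p * ∑ z ∈ Z p, ind p z h * N h := by
            rw [ENNReal.tsum_mul_left, Summable.tsum_finsetSum (fun _ _ => ENNReal.summable)]
        _ = cPE * ∑ p ∈ Pset n, cZE p * ∑ z ∈ Z p, ∑' h, ind p z h * N h := by
            refine congrArg _ (Finset.sum_congr rfl fun p _ => ?_)
            rw [ENNReal.tsum_mul_left, Summable.tsum_finsetSum (fun _ _ => ENNReal.summable)]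
    rw [e2, ENNReal.ofReal_mul hcPn,
      ENNReal.ofReal_sum_of_nonneg (fun p _ => by positivity)]
    refine mul_le_mul_right (Finset.sum_le_sum fun p hp => ?_) _
    rw [ENNReal.ofReal_mul (hcZn p),
      ENNReal.ofReal_sum_of_nonneg (fun z _ => norm_nonneg _)]
    exact mul_le_mul_right (Finset.sum_le_sum fun z hz => keyA p z) _
  -- W vanishes outside T
  have hWzero : ∀ h ∉ T, W h = 0 := by
    intro h hh
    have : ∀ p ∈ Pset n, ∀ z ∈ Z p, ind p z h = 0 := by
      intro p hp z hz
      rw [hind]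
      simp only [ite_eq_right_iff, one_ne_zero]
      intro hmem
      exact hh (hdualT p hp z hz hmem)
    rw [hW]
    simp only
    rw [Finset.sum_eq_zero, mul_zero]
    intro p hp
    rw [Finset.sum_eq_zero (fun z hz => this p hp z hz), mul_zero]
  have hsupp : Function.support (fun h => W h * N h) ⊆ T := by
    intro h hh
    by_contra hhT
    simp only [Function.mem_support, ne_eq] at hh
    exact hh (by rw [hWzero h hhT, zero_mul])
  have keyC : ∑' h, W h * N h = ∑' h : T, W h.1 * N h.1 :=
    (tsum_subtype_eq_of_support_subset hsupp).symm
  -- W equals ofReal ∘ omegan on T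
  have homega_nonneg : ∀ h, 0 ≤ omegan d n Z h := by
    intro h
    unfold omegan
    refine mul_nonneg (by positivity) (Finset.sum_nonneg fun p _ =>
      mul_nonneg (by positivity) (Finset.sum_nonneg fun z _ => ?_))
    split <;> norm_num
  have keyD : ∀ h : T, W h.1 = ENNReal.ofReal (omegan d n Z h.1) := by
    rintro ⟨h, hh0, hhB⟩
    simp only
    unfold omegan
    rw [ENNReal.ofReal_mul hcPn, ENNReal.ofReal_sum_of_nonneg (fun p _ =>
      mul_nonneg (hcZn p) (Finset.sum_nonneg fun z _ => by split <;> norm_num))]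
    rw [hW]
    simp only
    refine congrArg _ (Finset.sum_congr rfl fun p hp => ?_)
    rw [ENNReal.ofReal_mul (hcZn p), ENNReal.ofReal_sum_of_nonneg
      (fun z _ => by split <;> norm_num)]
    refine congrArg _ (Finset.sum_congr rfl fun z hz => ?_)
    rw [hind]
    simp only [dual, Set.mem_setOf_eq, hh0, ne_eq, not_false_iff, true_and]
    split <;> simp
  -- put it together and apply Cauchy-Schwarz
  set f : T → ℝ≥0∞ := fun h => ENNReal.ofReal (omegan d n Z h.1 / rwt d α γ h.1) with hf
  set g : T → ℝ≥0∞ := fun h => ENNReal.ofReal (rwt d α γ h.1 * ‖a h.1‖) with hg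
  have keyE : ∑' h : T, W h.1 * N h.1 = ∑' h : T, f h * g h := by
    refine tsum_congr fun h => ?_
    rw [keyD h, hN, hf, hg]
    simp only
    rw [← ENNReal.ofReal_mul (homega_nonneg h.1), ← ENNReal.ofReal_mul
      (div_nonneg (homega_nonneg h.1) (le_of_lt (rwt_pos d α γ h.1)))]
    congr 1
    have hrne : rwt d α γ h.1 ≠ 0 := ne_of_gt (rwt_pos d α γ h.1)
    field_simp
  have keyF : (∑' h : T, g h ^ (2:ℝ)) ≤ 1 := by
    have e : ∀ h : T, g h ^ (2:ℝ) = ENNReal.ofReal (rwt d α γ h.1 ^ 2 * ‖a h.1‖ ^ 2) := by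
      intro h
      rw [hg]
      simp only
      rw [ENNReal.ofReal_rpow_of_nonneg (mul_nonneg (le_of_lt (rwt_pos d α γ h.1))
        (norm_nonneg _)) (by norm_num), Real.rpow_two, mul_pow]
    calc (∑' h : T, g h ^ (2:ℝ))
        = ∑' h : T, ENNReal.ofReal (rwt d α γ h.1 ^ 2 * ‖a h.1‖ ^ 2) := tsum_congr e
      _ ≤ ∑' h : Fin d → ℤ, ENNReal.ofReal (rwt d α γ h ^ 2 * ‖a h‖ ^ 2) :=
          ENNReal.tsum_comp_le_tsum_of_injective Subtype.coe_injective _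
      _ = ENNReal.ofReal (∑' h : Fin d → ℤ, rwt d α γ h ^ 2 * ‖a h‖ ^ 2) :=
          (ENNReal.ofReal_tsum_of_nonneg (fun h => by positivity) ha).symm
      _ ≤ 1 := by
          rw [← ENNReal.ofReal_one]
          exact ENNReal.ofReal_le_ofReal ha1
  have keyG : (∑' h : T, f h ^ (2:ℝ))
      = ∑' h : {h : Fin d → ℤ // h ≠ 0 ∧ B < rwt d α γ h},
          ENNReal.ofReal ((omegan d n Z h.1 / rwt d α γ h.1) ^ 2) := by
    refine tsum_congr fun h => ?_
    rw [hf]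
    simp only
    rw [ENNReal.ofReal_rpow_of_nonneg
      (div_nonneg (homega_nonneg h.1) (le_of_lt (rwt_pos d α γ h.1))) (by norm_num),
      Real.rpow_two]
  calc ENNReal.ofReal (cP * ∑ p ∈ Pset n,
        cZ p * ∑ z ∈ Z p, ‖∑' h : dual d p z, a h.1‖)
      ≤ ∑' h, W h * N h := keyB
    _ = ∑' h : T, f h * g h := by rw [keyC, keyE]
    _ ≤ (∑' h : T, f h ^ (2:ℝ)) ^ ((1:ℝ)/2) * (∑' h : T, g h ^ (2:ℝ)) ^ ((1:ℝ)/2) :=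
        ennreal_cauchy_schwarz f g
    _ ≤ (∑' h : T, f h ^ (2:ℝ)) ^ ((1:ℝ)/2) * 1 := by
        exact mul_le_mul_right (ENNReal.rpow_le_one keyF (by norm_num)) _
    _ = (∑' h : {h : Fin d → ℤ // h ≠ 0 ∧ B < rwt d α γ h},
          ENNReal.ofReal ((omegan d n Z h.1 / rwt d α γ h.1) ^ 2)) ^ (1/2:ℝ) := by
        rw [mul_one, keyG]
end
end

section
/- Let d ∈ ℕ, n ≥ 2, and for each p ∈ P_n let Z_p ⊆ {1,…,p−1}^d satisfy |Z_p| ≥ ⌈(p−1)^d/2⌉. Then for every h ∈ ℤ^d \ {0}, ω_n(h) := (1/|P_n|) ∑_{p∈P_n} (1/|Z_p|) ∑_{z∈Z_p} 1(h·z ≡ 0 (mod p)) satisfies ω_n(h) ≤ (1/|P_n|) ∑_{p∈P_n} 1(h ≡ 0 (mod p)) + 4/n, where h ≡ 0 (mod p) means every component of h is divisible by p. -/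
open scoped BigOperators
open Classical

noncomputable section

lemma nat_aux (d n p c s : ℕ) (hd : 0 < d) (hn : 2 ≤ n) (hple : (n+1)/2 + 1 ≤ p)
    (hcard : ((p-1)^d + 1)/2 ≤ c) (hSc : s ≤ (p-1)^(d-1)) :
    s * n ≤ 4 * c := by
  have hpow : (p-1)^d = (p-1)^(d-1) * (p-1) := by
    obtain ⟨e, rfl⟩ : ∃ e, d = e + 1 := ⟨d - 1, by omega⟩
    simp [pow_succ]
  have h1 : s * n ≤ (p-1)^(d-1) * n := Nat.mul_le_mul_right _ hSc
  have h2 : n ≤ 2 * (p-1) := by omega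
  have h3 : (p-1)^(d-1) * n ≤ (p-1)^(d-1) * (2*(p-1)) := Nat.mul_le_mul_left _ h2
  have h4 : (p-1)^(d-1) * (2*(p-1)) = 2 * ((p-1)^d) := by rw [hpow]; ring
  have h5 : 2 * ((p-1)^d) ≤ 4 * c := by omega
  omega

lemma count_le (d : ℕ) (hd : 0 < d) (p : ℕ) (hp : p.Prime)
    (Z : Finset (Fin d → ℕ)) (hsub : Z ⊆ genSet d p)
    (h : Fin d → ℤ) (j0 : Fin d) (hj0 : ¬ (p:ℤ) ∣ h j0) :
    (Z.filter fun z => (p:ℤ) ∣ ∑ j, h j * (z j : ℤ)).card ≤ (p-1)^(d-1) := by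
  classical
  have hcard : (Fintype.piFinset fun _ : {j : Fin d // j ≠ j0} => Finset.Icc 1 (p-1)).card
      = (p-1)^(d-1) := by
    rw [Fintype.card_piFinset]
    have : Fintype.card {j : Fin d // j ≠ j0} = d - 1 := by
      simp [Fintype.card_subtype_compl]
    simp [Nat.card_Icc, this]
  rw [← hcard]
  apply Finset.card_le_card_of_injOn (fun z (j : {j : Fin d // j ≠ j0}) => z j.1)
  · intro z hz
    rw [Finset.mem_coe, Fintype.mem_piFinset]
    intro j
    have hzg := hsub (Finset.mem_filter.mp hz).1
    rw [genSet, Fintype.mem_piFinset] at hzg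
    exact hzg j.1
  · intro z hz z' hz' hzz
    obtain ⟨hzZ, hdz⟩ := Finset.mem_filter.mp hz
    obtain ⟨hz'Z, hdz'⟩ := Finset.mem_filter.mp hz'
    have heq : ∀ j : Fin d, j ≠ j0 → z j = z' j := fun j hj => congrFun hzz ⟨j, hj⟩
    funext j
    by_cases hj : j = j0
    · subst hj
      have hsum : (∑ k, h k * (z k:ℤ)) - ∑ k, h k * (z' k:ℤ)
          = h j * ((z j:ℤ) - (z' j:ℤ)) := by
        rw [← Finset.sum_sub_distrib]
        rw [Finset.sum_eq_single j]
        · ring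
        · intro k _ hk
          rw [heq k hk]; ring
        · simp
      have hdiff : (p:ℤ) ∣ h j * ((z j:ℤ) - (z' j:ℤ)) := hsum ▸ dvd_sub hdz hdz'
      have hpz : Prime (p:ℤ) := Nat.prime_iff_prime_int.mp hp
      have hdvd : (p:ℤ) ∣ ((z j:ℤ) - (z' j:ℤ)) :=
        (hpz.dvd_mul.mp hdiff).resolve_left hj0
      have hb1 : z j ∈ Finset.Icc 1 (p-1) := by
        have := hsub hzZ; rw [genSet, Fintype.mem_piFinset] at this; exact this j
      have hb2 : z' j ∈ Finset.Icc 1 (p-1) := by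
        have := hsub hz'Z; rw [genSet, Fintype.mem_piFinset] at this; exact this j
      rw [Finset.mem_Icc] at hb1 hb2
      have hp2 := hp.two_le
      have : (z j:ℤ) - (z' j:ℤ) = 0 := by
        apply Int.eq_zero_of_abs_lt_dvd hdvd
        rw [abs_lt]
        constructor <;> push_cast <;> omega
      omega
    · exact heq j hj

lemma inner_le (d : ℕ) (hd : 0 < d) (n p : ℕ) (hp : p ∈ Pset n) (hn : 2 ≤ n)
    (Z : Finset (Fin d → ℕ)) (hsub : Z ⊆ genSet d p)
    (hcard : ((p-1)^d + 1)/2 ≤ Z.card) (h : Fin d → ℤ) :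
    (1 / (Z.card : ℝ)) * ∑ z ∈ Z, (if (p:ℤ) ∣ ∑ j, h j * (z j : ℤ) then (1:ℝ) else 0)
      ≤ (if ∀ j, (p:ℤ) ∣ h j then (1:ℝ) else 0) + 4 / n := by
  classical
  obtain ⟨hpI, hprime⟩ := Finset.mem_filter.mp hp
  rw [Finset.mem_Icc] at hpI
  have hp2 := hprime.two_le
  have hq1 : 1 ≤ (p-1)^d := Nat.one_le_pow _ _ (by omega)
  have hZpos : 0 < Z.card := by omega
  have hZposR : (0:ℝ) < (Z.card : ℝ) := by exact_mod_cast hZpos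
  have hnR : (0:ℝ) < (n:ℝ) := by positivity
  have hsum : (∑ z ∈ Z, (if (p:ℤ) ∣ ∑ j, h j * (z j : ℤ) then (1:ℝ) else 0))
      = ((Z.filter fun z => (p:ℤ) ∣ ∑ j, h j * (z j : ℤ)).card : ℝ) := by
    simp [Finset.sum_boole]
  rw [hsum]
  by_cases hall : ∀ j, (p:ℤ) ∣ h j
  · rw [if_pos hall]
    have h1 : (1 / (Z.card : ℝ)) * ((Z.filter fun z => (p:ℤ) ∣ ∑ j, h j * (z j : ℤ)).card : ℝ)
        ≤ 1 := by
      rw [one_div, inv_mul_le_iff₀ hZposR, mul_one]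
      exact_mod_cast Finset.card_le_card (Finset.filter_subset _ _)
    nlinarith [div_nonneg (by norm_num : (0:ℝ) ≤ 4) hnR.le]
  · rw [if_neg hall]
    push_neg at hall
    obtain ⟨j0, hj0⟩ := hall
    have hSc := count_le d hd p hprime Z hsub h j0 hj0
    have hnat : (Z.filter fun z => (p:ℤ) ∣ ∑ j, h j * (z j : ℤ)).card * n ≤ 4 * Z.card :=
      nat_aux d n p Z.card _ hd hn hpI.1 hcard hSc
    rw [zero_add, one_div, inv_mul_le_iff₀ hZposR, mul_comm, div_mul_eq_mul_div,
      le_div_iff₀ hnR]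
    calc ((Z.filter fun z => (p:ℤ) ∣ ∑ j, h j * (z j : ℤ)).card : ℝ) * n
        = (((Z.filter fun z => (p:ℤ) ∣ ∑ j, h j * (z j : ℤ)).card * n : ℕ) : ℝ) := by
          push_cast; ring
      _ ≤ ((4 * Z.card : ℕ) : ℝ) := by exact_mod_cast hnat
      _ = 4 * (Z.card : ℝ) := by push_cast; ring


/-- If `|Z_p| ≥ ⌈(p−1)^d/2⌉` for all `p ∈ P_n`, then for every `h ≠ 0`,
`ω_n(h) ≤ (1/|P_n|) ∑_{p ∈ P_n} 1(h ≡ 0 (mod p)) + 4/n`. -/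
theorem omegan_le
    (d : ℕ) (hd : 0 < d) (n : ℕ) (hn : 2 ≤ n)
    (Z : ℕ → Finset (Fin d → ℕ))
    (hZsub : ∀ p ∈ Pset n, Z p ⊆ genSet d p)
    (hZcard : ∀ p ∈ Pset n, ((p - 1) ^ d + 1) / 2 ≤ (Z p).card)
    (h : Fin d → ℤ) (hh : h ≠ 0) :
    omegan d n Z h ≤
      (1 / ((Pset n).card : ℝ)) * ∑ p ∈ Pset n,
        (if ∀ j, (p : ℤ) ∣ h j then (1 : ℝ) else 0) + 4 / n := by
  unfold omegan
  classical
  set c := ((Pset n).card : ℝ)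
  rcases eq_or_ne (Pset n).card 0 with hc | hc
  · rw [Finset.card_eq_zero] at hc
    simp [c, hc]
    positivity
  · have hcpos : (0:ℝ) < c := by
      simp only [c]; exact_mod_cast Nat.pos_of_ne_zero hc
    have hstep : ∑ p ∈ Pset n,
        (1 / ((Z p).card : ℝ)) * ∑ z ∈ Z p,
          (if (p : ℤ) ∣ ∑ j, h j * (z j : ℤ) then (1 : ℝ) else 0)
        ≤ ∑ p ∈ Pset n, ((if ∀ j, (p:ℤ) ∣ h j then (1:ℝ) else 0) + 4 / n) := by
      apply Finset.sum_le_sum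
      intro p hp
      exact inner_le d hd n p hp hn (Z p) (hZsub p hp) (hZcard p hp) h
    rw [Finset.sum_add_distrib, Finset.sum_const, nsmul_eq_mul] at hstep
    have := mul_le_mul_of_nonneg_left hstep (le_of_lt (one_div_pos.mpr hcpos))
    calc (1 / c) * ∑ p ∈ Pset n,
        (1 / ((Z p).card : ℝ)) * ∑ z ∈ Z p,
          (if (p : ℤ) ∣ ∑ j, h j * (z j : ℤ) then (1 : ℝ) else 0)
        ≤ (1 / c) * ((∑ p ∈ Pset n, (if ∀ j, (p:ℤ) ∣ h j then (1:ℝ) else 0)) + c * (4 / n)) :=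
          this
      _ = (1 / c) * (∑ p ∈ Pset n, (if ∀ j, (p:ℤ) ∣ h j then (1:ℝ) else 0)) + 4 / n := by
          field_simp
end
end

section
/- Let d ∈ ℕ, let p be a prime, let z ∈ {1,…,p−1}^d, and let a : ℤ^d → ℂ be absolutely summable. Define f(x) := ∑_{h∈ℤ^d} a_h e^{2πi h·x} for x ∈ ℝ^d. Then ∫_{[0,1]^d} | (1/p) ∑_{k=0}^{p−1} f({k z/p + u}) − a_0 |² du = ∑_{h ∈ ℤ^d \ {0}, h·z ≡ 0 (mod p)} |a_h|², where {·} denotes the componentwise fractional part. (That is, the mean square error of the randomly shifted lattice rule over a uniform shift u ∈ [0,1]^d equals the sum of the squared Fourier coefficients over the nonzero dual lattice points.) -/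
open scoped BigOperators
open Classical

noncomputable section

namespace LatHelp

open Complex MeasureTheory

def eC (t : ℝ) : ℂ := Complex.exp (2 * Real.pi * Complex.I * t)

lemma eC_norm (t : ℝ) : ‖eC t‖ = 1 := by
  rw [eC, show (2 * (Real.pi : ℂ) * Complex.I * t) = ((2 * Real.pi * t : ℝ) : ℂ) * Complex.I by
    push_cast; ring, Complex.norm_exp_ofReal_mul_I]

lemma eC_add (s t : ℝ) : eC (s + t) = eC s * eC t := by
  rw [eC, eC, eC, ← Complex.exp_add]; congr 1; push_cast; ring

lemma eC_int (n : ℤ) : eC n = 1 := by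
  rw [eC, show (2 * (Real.pi : ℂ) * Complex.I * ((n : ℝ) : ℂ)) = (n : ℂ) * (2 * Real.pi * Complex.I) by
    push_cast; ring, Complex.exp_int_mul_two_pi_mul_I]

lemma eC_zero : eC 0 = 1 := by simpa using eC_int 0

lemma eC_nat_mul (k : ℕ) (t : ℝ) : eC (k * t) = eC t ^ k := by
  rw [eC, eC, ← Complex.exp_nat_mul]; congr 1; push_cast; ring

lemma eC_conj (t : ℝ) : star (eC t) = eC (-t) := by
  rw [eC, eC, ← starRingEnd_apply, ← Complex.exp_conj]
  congr 1
  simp only [map_mul, Complex.conj_I, Complex.conj_ofReal, map_ofNat]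
  push_cast; ring

lemma eC_sum {ι : Type*} (s : Finset ι) (t : ι → ℝ) :
    eC (∑ i ∈ s, t i) = ∏ i ∈ s, eC (t i) := by
  simp only [eC, ← Complex.exp_sum]
  congr 1
  push_cast [Finset.mul_sum]
  rfl


lemma char_sum {p : ℕ} (hp : p.Prime) (m : ℤ) :
    ∑ k ∈ Finset.range p, eC ((k : ℝ) * ((m : ℝ) / p)) = if (p : ℤ) ∣ m then (p : ℂ) else 0 := by
  have hp0 : (p : ℝ) ≠ 0 := Nat.cast_ne_zero.mpr hp.pos.ne'
  simp_rw [eC_nat_mul]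
  by_cases hdvd : (p : ℤ) ∣ m
  · obtain ⟨c, rfl⟩ := hdvd
    have hc : ((p * c : ℤ) : ℝ) / p = ((c : ℤ) : ℝ) := by push_cast; field_simp
    rw [if_pos ⟨c, rfl⟩, hc, eC_int c]
    simp
  · rw [if_neg hdvd]
    have hx1 : eC ((m : ℝ) / p) ≠ 1 := by
      intro hcon
      rw [eC, Complex.exp_eq_one_iff] at hcon
      obtain ⟨n, hn⟩ := hcon
      have h2 : (2 * (Real.pi : ℂ) * Complex.I) ≠ 0 := by
        simp [Real.pi_ne_zero, Complex.I_ne_zero]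
      have hq : (((m : ℝ) / p : ℝ) : ℂ) = (n : ℂ) := by
        apply mul_left_cancel₀ h2
        rw [hn]; ring
      have hq' : (m : ℝ) / p = (n : ℝ) := by exact_mod_cast hq
      have hmnp : (m : ℝ) = (n : ℝ) * p := by field_simp at hq'; linarith
      have : m = n * p := by exact_mod_cast hmnp
      exact hdvd ⟨n, by linarith [this]⟩
    rw [geom_sum_eq hx1]
    have hxp : eC ((m : ℝ) / p) ^ p = 1 := by
      rw [← eC_nat_mul, show (p : ℝ) * ((m : ℝ) / p) = (m : ℝ) by field_simp, eC_int m]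
    rw [hxp, sub_self, zero_div]

lemma oneD (m : ℤ) : (∫ x in Set.Icc (0 : ℝ) 1, eC ((m : ℝ) * x)) = if m = 0 then 1 else 0 := by
  by_cases hm : m = 0
  · subst hm
    simp only [if_pos rfl, Int.cast_zero, zero_mul, eC_zero]
    rw [setIntegral_const]
    simp [Real.volume_Icc]
  · rw [if_neg hm, integral_Icc_eq_integral_Ioc, ← intervalIntegral.integral_of_le zero_le_one]
    have hc : (2 * (Real.pi : ℂ) * Complex.I * m) ≠ 0 := by
      simp [Real.pi_ne_zero, Complex.I_ne_zero, hm]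
    have heq : ∀ x : ℝ, eC ((m : ℝ) * x) = Complex.exp ((2 * (Real.pi : ℂ) * Complex.I * m) * x) := by
      intro x; rw [eC]; congr 1; push_cast; ring
    simp_rw [heq]
    rw [integral_exp_mul_complex hc]
    simp only [Complex.ofReal_one, Complex.ofReal_zero]
    have h1 : Complex.exp ((2 * (Real.pi : ℂ) * Complex.I * m) * 1) = 1 := by
      rw [show (2 * (Real.pi : ℂ) * Complex.I * m) * 1 = (m : ℂ) * (2 * Real.pi * Complex.I) by ring,
        Complex.exp_int_mul_two_pi_mul_I]
    have h0 : Complex.exp ((2 * (Real.pi : ℂ) * Complex.I * m) * 0) = 1 := by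
      rw [mul_zero, Complex.exp_zero]
    rw [h1, h0, sub_self, zero_div]

lemma restrict_cube (d : ℕ) :
    (volume : Measure (Fin d → ℝ)).restrict (Set.univ.pi fun _ => Set.Icc 0 1)
      = Measure.pi fun _ : Fin d => volume.restrict (Set.Icc (0 : ℝ) 1) := by
  refine (Measure.pi_eq fun s hs => ?_).symm
  rw [Measure.restrict_apply (MeasurableSet.univ_pi hs), ← Set.pi_inter_distrib, volume_pi_pi]
  exact Finset.prod_congr rfl fun i _ => (Measure.restrict_apply (hs i)).symm

lemma cube_prod (d : ℕ) (g : Fin d → ℝ → ℂ) :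
    (∫ u in Set.univ.pi fun _ : Fin d => Set.Icc (0 : ℝ) 1, ∏ j, g j (u j))
      = ∏ j, ∫ x in Set.Icc (0 : ℝ) 1, g j x := by
  rw [restrict_cube]
  exact MeasureTheory.integral_fintype_prod_eq_prod (f := g)
    (μ := fun _ => volume.restrict (Set.Icc (0 : ℝ) 1))

lemma volume_cube (d : ℕ) :
    (volume : Measure (Fin d → ℝ)) (Set.univ.pi fun _ => Set.Icc 0 1) = 1 := by
  rw [volume_pi_pi]
  simp [Real.volume_Icc]

lemma cube_int (d : ℕ) (w : Fin d → ℤ) :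
    (∫ u in Set.univ.pi fun _ : Fin d => Set.Icc (0 : ℝ) 1, eC (∑ j, (w j : ℝ) * u j))
      = if w = 0 then 1 else 0 := by
  simp_rw [eC_sum]
  rw [cube_prod d fun j x => eC ((w j : ℝ) * x)]
  simp_rw [oneD]
  by_cases hw : w = 0
  · subst hw; simp
  · rw [if_neg hw]
    obtain ⟨j, hj⟩ := Function.ne_iff.mp hw
    exact Finset.prod_eq_zero (Finset.mem_univ j) (if_neg hj)


lemma exp_form (d : ℕ) (h : Fin d → ℤ) (x : Fin d → ℝ) :
    Complex.exp (2 * (Real.pi : ℂ) * Complex.I * ∑ j, (h j : ℂ) * (x j : ℂ))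
      = eC (∑ j, (h j : ℝ) * x j) := by
  rw [eC]; congr 1; push_cast; ring

lemma eC_fract_sum (d : ℕ) (h : Fin d → ℤ) (y : Fin d → ℝ) :
    eC (∑ j, (h j : ℝ) * Int.fract (y j)) = eC (∑ j, (h j : ℝ) * y j) := by
  have key : (∑ j, (h j : ℝ) * Int.fract (y j))
      = (∑ j, (h j : ℝ) * y j) + ((-∑ j, h j * ⌊y j⌋ : ℤ) : ℝ) := by
    push_cast
    simp only [Int.fract, mul_sub]
    rw [Finset.sum_sub_distrib]
    ring
  rw [key, eC_add, eC_int, mul_one]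

lemma summable_unit (d : ℕ) (a : (Fin d → ℤ) → ℂ) (ha : Summable fun h : Fin d → ℤ => ‖a h‖)
    (g : (Fin d → ℤ) → ℂ) (hg : ∀ h, ‖g h‖ = 1) : Summable fun h => a h * g h :=
  Summable.of_norm (ha.congr fun h => by rw [norm_mul, hg h, mul_one])

lemma pointwise_rep (d p : ℕ) (hp : p.Prime) (z : Fin d → ℕ)
    (a : (Fin d → ℤ) → ℂ) (ha : Summable fun h : Fin d → ℤ => ‖a h‖)
    (f : (Fin d → ℝ) → ℂ)
    (hf : ∀ x : Fin d → ℝ, f x = ∑' h : Fin d → ℤ,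
      a h * Complex.exp (2 * (Real.pi : ℂ) * Complex.I * ∑ j, (h j : ℂ) * (x j : ℂ)))
    (u : Fin d → ℝ) :
    (1 / (p : ℂ)) * ∑ k ∈ Finset.range p,
        f (fun j => Int.fract (((k * z j : ℕ) : ℝ) / (p : ℝ) + u j)) - a 0
      = ∑' h : dual d p z, a h.1 * eC (∑ j, (h.1 j : ℝ) * u j) := by
  have hp0 : (p : ℝ) ≠ 0 := Nat.cast_ne_zero.mpr hp.pos.ne'
  have hpc : (p : ℂ) ≠ 0 := Nat.cast_ne_zero.mpr hp.pos.ne'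
  set m : (Fin d → ℤ) → ℤ := fun h => ∑ j, h j * (z j : ℤ) with hm
  set W : (Fin d → ℤ) → ℂ := fun h => a h * eC (∑ j, (h j : ℝ) * u j) with hW
  -- Step A : rewrite each sample value of f
  have hA : ∀ k ∈ Finset.range p,
      f (fun j => Int.fract (((k * z j : ℕ) : ℝ) / (p : ℝ) + u j))
        = ∑' h : Fin d → ℤ, W h * eC ((k : ℝ) * ((m h : ℝ) / p)) := by
    intro k _
    rw [hf]
    refine tsum_congr fun h => ?_
    rw [exp_form]
    rw [eC_fract_sum d h fun j => ((k * z j : ℕ) : ℝ) / (p : ℝ) + u j]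
    have harith : (∑ j, (h j : ℝ) * (((k * z j : ℕ) : ℝ) / (p : ℝ) + u j))
        = (k : ℝ) * ((m h : ℝ) / p) + ∑ j, (h j : ℝ) * u j := by
      simp only [mul_add]
      rw [Finset.sum_add_distrib]
      congr 1
      rw [hm]
      push_cast
      rw [Finset.sum_div, Finset.mul_sum]
      exact Finset.sum_congr rfl fun j _ => by ring
    rw [harith, eC_add, hW]
    ring
  rw [Finset.sum_congr rfl hA]
  -- Step B : swap the finite sum and the series
  have hsum : ∀ k ∈ Finset.range p,
      Summable fun h : Fin d → ℤ => W h * eC ((k : ℝ) * ((m h : ℝ) / p)) := by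
    intro k _
    have : ∀ h, ‖eC (∑ j, (h j : ℝ) * u j) * eC ((k : ℝ) * ((m h : ℝ) / p))‖ = 1 := fun h => by
      rw [norm_mul, eC_norm, eC_norm, mul_one]
    simpa [hW, mul_assoc] using summable_unit d a ha _ this
  rw [← Summable.tsum_finsetSum hsum]
  -- Step C : evaluate the character sums
  have hB : ∀ h : Fin d → ℤ,
      (∑ k ∈ Finset.range p, W h * eC ((k : ℝ) * ((m h : ℝ) / p)))
        = if (p : ℤ) ∣ m h then (p : ℂ) * W h else 0 := by
    intro h
    rw [← Finset.mul_sum, char_sum hp (m h)]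
    split_ifs with hd
    · ring
    · rw [mul_zero]
  rw [tsum_congr hB]
  -- Step D : divide by p
  have hC : ∀ h : Fin d → ℤ,
      (1 / (p : ℂ)) * (if (p : ℤ) ∣ m h then (p : ℂ) * W h else 0)
        = if (p : ℤ) ∣ m h then W h else 0 := by
    intro h
    split_ifs with hd
    · field_simp
    · rw [mul_zero]
  rw [← tsum_mul_left, tsum_congr hC]
  -- Step E : split off the origin and restrict to the dual lattice
  have hzero : (0 : Fin d → ℤ) ∉ dual d p z := fun hmem => hmem.1 rfl
  have hG : ∀ h : Fin d → ℤ,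
      (if (p : ℤ) ∣ m h then W h else 0)
        = Set.indicator (dual d p z) W h + (if h = 0 then W h else 0) := by
    intro h
    by_cases h0 : h = 0
    · subst h0
      rw [if_pos rfl, Set.indicator_of_notMem hzero, zero_add, if_pos]
      rw [hm]
      simp
    · rw [if_neg h0, add_zero]
      by_cases hdd : (p : ℤ) ∣ m h
      · rw [if_pos hdd, Set.indicator_of_mem (show h ∈ dual d p z from ⟨h0, hdd⟩) W]
      · rw [if_neg hdd, Set.indicator_of_notMem fun hmem => hdd hmem.2]
  rw [tsum_congr hG]
  have hsInd : Summable (Set.indicator (dual d p z) W) := by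
    refine Summable.of_norm (Summable.of_nonneg_of_le (fun h => norm_nonneg _) (fun h => ?_) ha)
    refine (norm_indicator_le_norm_self W h).trans ?_
    rw [hW]
    simp only [norm_mul, eC_norm, mul_one]
    exact le_rfl
  have hsOne : Summable fun h : Fin d → ℤ => if h = 0 then W h else 0 := by
    have : (fun h : Fin d → ℤ => if h = 0 then W h else 0)
        = fun h : Fin d → ℤ => if h = 0 then W 0 else 0 := by
      funext h; split_ifs with h0
      · rw [h0]
      · rfl
    rw [this]
    exact (hasSum_ite_eq 0 (W 0)).summable
  rw [Summable.tsum_add hsInd hsOne]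
  have hW0 : W 0 = a 0 := by
    rw [hW]
    simp [eC_zero]
  have hT1 : (∑' h : Fin d → ℤ, if h = 0 then W h else 0) = a 0 := by
    have : (fun h : Fin d → ℤ => if h = 0 then W h else 0)
        = fun h : Fin d → ℤ => if h = 0 then a 0 else 0 := by
      funext h; split_ifs with h0
      · rw [h0, hW0]
      · rfl
    rw [this]
    exact tsum_ite_eq 0 (fun _ => a 0)
  rw [hT1, ← tsum_subtype (dual d p z) W]
  ring


set_option maxHeartbeats 1000000 in
lemma parseval (d p : ℕ) (z : Fin d → ℕ)
    (a : (Fin d → ℤ) → ℂ) (ha : Summable fun h : Fin d → ℤ => ‖a h‖) :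
    (∫ u in Set.univ.pi fun _ : Fin d => Set.Icc (0 : ℝ) 1,
        ‖∑' h : dual d p z, a h.1 * eC (∑ j, (h.1 j : ℝ) * u j)‖ ^ 2)
      = ∑' h : dual d p z, ‖a h.1‖ ^ 2 := by
  set T : Set (Fin d → ℝ) := Set.univ.pi fun _ : Fin d => Set.Icc (0 : ℝ) 1 with hT
  have haD : Summable fun h : dual d p z => ‖a h.1‖ := ha.subtype _
  set F : (dual d p z) × (dual d p z) → (Fin d → ℝ) → ℂ := fun q u =>
    (a q.1.1 * star (a q.2.1)) * eC (∑ j, ((q.1.1 j - q.2.1 j : ℤ) : ℝ) * u j) with hF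
  -- pointwise expansion of the squared norm
  have key : ∀ u : Fin d → ℝ,
      ((‖∑' h : dual d p z, a h.1 * eC (∑ j, (h.1 j : ℝ) * u j)‖ ^ 2 : ℝ) : ℂ)
        = ∑' q : (dual d p z) × (dual d p z), F q u := by
    intro u
    set g : ℂ := ∑' h : dual d p z, a h.1 * eC (∑ j, (h.1 j : ℝ) * u j) with hg
    have h1 : ((‖g‖ ^ 2 : ℝ) : ℂ) = g * star g := by
      rw [← starRingEnd_apply, Complex.mul_conj, Complex.normSq_eq_norm_sq]
    rw [h1, hg, tsum_star]
    have hn1 : Summable fun h : dual d p z => ‖a h.1 * eC (∑ j, (h.1 j : ℝ) * u j)‖ :=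
      haD.congr fun h => by rw [norm_mul, eC_norm, mul_one]
    have hn2 : Summable fun h : dual d p z => ‖star (a h.1 * eC (∑ j, (h.1 j : ℝ) * u j))‖ :=
      hn1.congr fun h => (norm_star _).symm
    rw [tsum_mul_tsum_of_summable_norm hn1 hn2]
    refine tsum_congr fun q => ?_
    rw [star_mul', eC_conj]
    have harith : (∑ j, (q.1.1 j : ℝ) * u j) + -(∑ j, (q.2.1 j : ℝ) * u j)
        = ∑ j, ((q.1.1 j - q.2.1 j : ℤ) : ℝ) * u j := by
      push_cast
      rw [← sub_eq_add_neg, ← Finset.sum_sub_distrib]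
      exact Finset.sum_congr rfl fun j _ => by ring
    rw [hF]
    simp only []
    rw [← harith, eC_add]
    ring
  -- continuity and integrability of each term
  have hTc : IsCompact T := isCompact_univ_pi fun _ => isCompact_Icc
  have hcont : ∀ q, Continuous (F q) := by
    intro q
    rw [hF]
    refine continuous_const.mul ?_
    refine Complex.continuous_exp.comp (continuous_const.mul ?_)
    exact Complex.continuous_ofReal.comp
      (continuous_finset_sum _ fun j _ => continuous_const.mul (continuous_apply j))
  have hint : ∀ q, IntegrableOn (F q) T := fun q => ContinuousOn.integrableOn_compact hTc (hcont q).continuousOn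
  have hvol : (volume.restrict T) Set.univ = 1 := by
    rw [Measure.restrict_apply_univ, hT, volume_cube]
  have hnormint : ∀ q : (dual d p z) × (dual d p z),
      (∫ u in T, ‖F q u‖) = ‖a q.1.1‖ * ‖a q.2.1‖ := by
    intro q
    have hnn : ∀ u : Fin d → ℝ, ‖F q u‖ = ‖a q.1.1‖ * ‖a q.2.1‖ := fun u => by
      rw [hF]
      simp only []
      rw [norm_mul, norm_mul, eC_norm, mul_one, norm_star]
    rw [show (fun u => ‖F q u‖) = fun _ => ‖a q.1.1‖ * ‖a q.2.1‖ from funext hnn]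
    rw [setIntegral_const, hT, measureReal_def, volume_cube]
    simp
  have hprodsum : Summable fun q : (dual d p z) × (dual d p z) => ‖a q.1.1‖ * ‖a q.2.1‖ :=
    haD.mul_of_nonneg haD (fun h => norm_nonneg _) (fun h => norm_nonneg _)
  have hsum2 : Summable fun q : (dual d p z) × (dual d p z) => ∫ u in T, ‖F q u‖ :=
    hprodsum.congr fun q => (hnormint q).symm
  have hswap := MeasureTheory.integral_tsum_of_summable_integral_norm hint hsum2
  -- value of each integral
  have heach : ∀ q : (dual d p z) × (dual d p z),
      (∫ u in T, F q u) = if q.2 = q.1 then ((‖a q.1.1‖ ^ 2 : ℝ) : ℂ) else 0 := by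
    intro q
    rw [hF]
    simp only []
    rw [MeasureTheory.integral_const_mul, hT, cube_int d fun j => q.1.1 j - q.2.1 j]
    by_cases hq : q.2 = q.1
    · rw [if_pos hq, if_pos, mul_one]
      · rw [hq, ← starRingEnd_apply, Complex.mul_conj, Complex.normSq_eq_norm_sq]
      · funext j
        rw [hq]
        simp
    · rw [if_neg hq, if_neg, mul_zero]
      intro hcon
      apply hq
      apply Subtype.ext
      symm
      funext j
      have := congrFun hcon j
      simpa [sub_eq_zero] using this
  -- put everything together
  have hdiagsum : Summable fun q : (dual d p z) × (dual d p z) =>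
      if q.2 = q.1 then ((‖a q.1.1‖ ^ 2 : ℝ) : ℂ) else 0 := by
    refine Summable.of_norm_bounded hprodsum fun q => ?_
    by_cases hq : q.2 = q.1
    · rw [if_pos hq, Complex.norm_real, Real.norm_of_nonneg (sq_nonneg _), sq, hq]
    · rw [if_neg hq, norm_zero]
      positivity
  have hdiag : (∑' q : (dual d p z) × (dual d p z),
      if q.2 = q.1 then ((‖a q.1.1‖ ^ 2 : ℝ) : ℂ) else 0)
        = ∑' h : dual d p z, ((‖a h.1‖ ^ 2 : ℝ) : ℂ) := by
    rw [Summable.tsum_prod hdiagsum]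
    exact tsum_congr fun h => by simpa using tsum_ite_eq h (fun _ => (((‖a h.1‖ ^ 2 : ℝ)) : ℂ))
  have main : ((∫ u in T,
      ‖∑' h : dual d p z, a h.1 * eC (∑ j, (h.1 j : ℝ) * u j)‖ ^ 2 : ℝ) : ℂ)
      = ((∑' h : dual d p z, ‖a h.1‖ ^ 2 : ℝ) : ℂ) := by
    rw [show ((∫ u in T, ‖∑' h : dual d p z, a h.1 * eC (∑ j, (h.1 j : ℝ) * u j)‖ ^ 2 : ℝ) : ℂ)
        = ∫ u in T, ((‖∑' h : dual d p z, a h.1 * eC (∑ j, (h.1 j : ℝ) * u j)‖ ^ 2 : ℝ) : ℂ)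
      from (integral_ofReal (𝕜 := ℂ)).symm]
    calc (∫ u in T, ((‖∑' h : dual d p z, a h.1 * eC (∑ j, (h.1 j : ℝ) * u j)‖ ^ 2 : ℝ) : ℂ))
        = ∫ u in T, ∑' q : (dual d p z) × (dual d p z), F q u := by
          exact integral_congr_ae (Filter.Eventually.of_forall fun u => key u)
      _ = ∑' q : (dual d p z) × (dual d p z), ∫ u in T, F q u := hswap.symm
      _ = ∑' q : (dual d p z) × (dual d p z),
            if q.2 = q.1 then ((‖a q.1.1‖ ^ 2 : ℝ) : ℂ) else 0 := tsum_congr heach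
      _ = ∑' h : dual d p z, ((‖a h.1‖ ^ 2 : ℝ) : ℂ) := hdiag
      _ = ((∑' h : dual d p z, ‖a h.1‖ ^ 2 : ℝ) : ℂ) := (Complex.ofReal_tsum _).symm
  exact_mod_cast main

end LatHelp

open MeasureTheory

/-- Parseval for the shifted lattice rule: the mean square error of the randomly shifted
rank-1 lattice rule over a uniform shift `u ∈ [0,1]^d` equals the sum of the squared
Fourier coefficients over the nonzero points of the dual lattice. -/
theorem shifted_lattice_rule_mean_square_error
    (d : ℕ) (hd : 0 < d) (p : ℕ) (hp : p.Prime)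
    (z : Fin d → ℕ) (hz : z ∈ genSet d p)
    (a : (Fin d → ℤ) → ℂ) (ha : Summable fun h : Fin d → ℤ => ‖a h‖)
    (f : (Fin d → ℝ) → ℂ)
    (hf : ∀ x : Fin d → ℝ, f x = ∑' h : Fin d → ℤ,
      a h * Complex.exp (2 * (Real.pi : ℂ) * Complex.I * ∑ j, (h j : ℂ) * (x j : ℂ))) :
    (∫ u in Set.univ.pi fun _ : Fin d => Set.Icc (0 : ℝ) 1,
        ‖(1 / (p : ℂ)) * ∑ k ∈ Finset.range p,
            f (fun j => Int.fract (((k * z j : ℕ) : ℝ) / (p : ℝ) + u j)) - a 0‖ ^ 2) =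
      ∑' h : dual d p z, ‖a h.1‖ ^ 2 := by
  have hpt := LatHelp.pointwise_rep d p hp z a ha f hf
  rw [← LatHelp.parseval d p z a ha]
  exact MeasureTheory.integral_congr_ae (Filter.Eventually.of_forall fun u => by beta_reduce; rw [hpt u])
end
end
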